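/- If R: V → G is a relative Rota-Baxter operator of weight 0, then the map Υ(u,v) = (Φ(R(u))v, Φ(R(Φ(R(u))v)⁻¹)u) satisfies the braid relation Υ₁Υ₂Υ₁ = Υ₂Υ₁Υ₂ on V×V×V, where Υ₁ = Υ×id and Υ₂ = id×Υ. -/

import Mathlib

/-- The Yang-Baxter map associated to a relative Rota-Baxter operator of weight 0. -/
def rrbYB {G V : Type*} [Group G] [AddCommGroup V] (Φ : G →* Multiplicative (AddAut V)) (R : V → G) :
    V × V → V × V :=
  fun p => ((Φ (R p.1)).toAdd p.2, (Φ ((R ((Φ (R p.1)).toAdd p.2))⁻¹)).toAdd p.1)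

/-- `Υ × id` acting on the first two components of `V × V × V`. -/
def rrbYB₁ {G V : Type*} [Group G] [AddCommGroup V] (Φ : G →* Multiplicative (AddAut V)) (R : V → G) :
    V × V × V → V × V × V :=
  fun p => ((rrbYB Φ R (p.1, p.2.1)).1, (rrbYB Φ R (p.1, p.2.1)).2, p.2.2)

/-- `id × Υ` acting on the last two components of `V × V × V`. -/
def rrbYB₂ {G V : Type*} [Group G] [AddCommGroup V] (Φ : G →* Multiplicative (AddAut V)) (R : V → G) :
    V × V × V → V × V × V :=
  fun p => (p.1, rrbYB Φ R p.2)

theorem rrb_solution_braid {G V : Type*} [Group G] [AddCommGroup V]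
    (Φ : G →* Multiplicative (AddAut V)) (R : V → G)
    (hR : ∀ u v : V, R u * R v = R (u + (Φ (R u)).toAdd v)) :
    rrbYB₁ Φ R ∘ rrbYB₂ Φ R ∘ rrbYB₁ Φ R = rrbYB₂ Φ R ∘ rrbYB₁ Φ R ∘ rrbYB₂ Φ R := by
  have hmul : ∀ (g h : G) (x : V), (Φ (g * h)).toAdd x = (Φ g).toAdd ((Φ h).toAdd x) := by
    intro g h x; rw [map_mul]; rfl
  have hinv2 : ∀ (g : G) (x : V), (Φ g).toAdd ((Φ g⁻¹).toAdd x) = x := by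
    intro g x; rw [map_inv]; exact (Φ g).apply_symm_apply x
  have hkey : ∀ u v : V,
      R ((Φ (R u)).toAdd v) * R ((Φ ((R ((Φ (R u)).toAdd v))⁻¹)).toAdd u) = R u * R v := by
    intro u v
    rw [hR ((Φ (R u)).toAdd v) _, hinv2, add_comm, ← hR u v]
  funext p
  obtain ⟨u, v, w⟩ := p
  simp only [Function.comp_apply, rrbYB₁, rrbYB₂, rrbYB]
  set v₁ := (Φ (R u)).toAdd v with hv₁
  set u₁ := (Φ ((R v₁)⁻¹)).toAdd u with hu₁
  set w₁ := (Φ (R u₁)).toAdd w with hw₁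
  set w₂ := (Φ (R v₁)).toAdd w₁ with hw₂
  set w₁' := (Φ (R v)).toAdd w with hw₁'
  set v₁' := (Φ ((R w₁')⁻¹)).toAdd v with hv₁'
  set w₂' := (Φ (R u)).toAdd w₁' with hw₂'
  set u₁' := (Φ ((R w₂')⁻¹)).toAdd u with hu₁'
  set v₂' := (Φ (R u₁')).toAdd v₁' with hv₂'
  have h1 : w₂ = w₂' := by
    rw [hw₂, hw₁, hw₂', hw₁', ← hmul, ← hmul, hkey u v]
  have hq : R u₁' = (R w₂')⁻¹ * (R u * R w₁') := by
    rw [eq_inv_mul_iff_mul_eq]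
    exact hkey u w₁'
  have h2 : (Φ ((R w₂)⁻¹)).toAdd v₁ = (Φ (R u₁')).toAdd v₁' := by
    rw [h1, hq, hmul, hmul, hv₁', hinv2, hv₁]
  have h3' : R v₁ * R w₁ = R w₂' * R v₂' := by
    rw [hR v₁ w₁, hR w₂' v₂', ← hw₂, hv₂', ← h2, ← h1, hinv2, add_comm]
  have h3 : (Φ ((R w₁)⁻¹)).toAdd u₁ = (Φ ((R v₂')⁻¹)).toAdd u₁' := by
    rw [hu₁, hu₁', ← hmul, ← hmul, ← mul_inv_rev, ← mul_inv_rev, h3']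
  simp only [Prod.mk.injEq]
  exact ⟨h1, h2, h3⟩
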